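/- Let V be a finite-dimensional complex vector space, F•_y a family of decreasing filtrations satisfying the p-opposedness condition F_y^p ∩ conj(F_y^{-p+1}) = 0 for all p (y > 0). If α ∈ V is nonzero and α ∈ F^p ∩ conj(F^{j-p}) with N^j α = 0, where N is a nilpotent real operator with N F^a ⊆ F^{a-1}, and F_y^• := exp(iyN)F^•, then exp(iyN)α ∈ F_y^p ∩ conj(F_y^{-p+1}), contradicting p-opposedness. Hence F^p ∩ conj(F^{j-p}) ∩ ker N^j = 0 for all p and j ≥ 0. -/

import Mathlib

open Complex

section Aux

variable {V : Type*} [NormedAddCommGroup V] [NormedSpace ℂ V] [FiniteDimensional ℂ V]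

/-- Explicit finite-sum formula for the exponential of a scalar multiple of a nilpotent
operator, applied to a vector. -/
lemma exp_nilpotent_apply (N : V →ₗ[ℂ] V) {m : ℕ} (hm : N ^ m = 0) (c : ℂ) (v : V) :
    NormedSpace.exp (c • LinearMap.toContinuousLinearMap N) v
      = ∑ k ∈ Finset.range m, ((k.factorial : ℂ)⁻¹ * c ^ k) • (N ^ k) v := by
  set T := LinearMap.toContinuousLinearMap N with hT
  have hcoe : ∀ (k : ℕ) (w : V), (T ^ k) w = (N ^ k) w := by
    intro k
    induction k with
    | zero => intro w; rfl
    | succ n ih =>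
      intro w
      rw [pow_succ', pow_succ', ContinuousLinearMap.mul_apply, Module.End.mul_apply, ih]
      simp [hT]
  have hTm : T ^ m = 0 := by
    ext w
    rw [hcoe, hm]
    rfl
  have hexp : NormedSpace.exp (c • T)
      = ∑ k ∈ Finset.range m, ((k.factorial : ℂ))⁻¹ • (c • T) ^ k := by
    rw [NormedSpace.exp_eq_tsum ℂ]
    refine tsum_eq_sum ?_
    intro n hn
    have hmn : m ≤ n := le_of_not_gt (fun h => hn (Finset.mem_range.2 h))
    have hTn : T ^ n = 0 := by
      calc T ^ n = T ^ (m + (n - m)) := by rw [Nat.add_sub_cancel' hmn]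
      _ = T ^ m * T ^ (n - m) := pow_add _ _ _
      _ = 0 := by rw [hTm, zero_mul]
    rw [smul_pow, hTn, smul_zero, smul_zero]
  rw [hexp]
  rw [ContinuousLinearMap.sum_apply]
  refine Finset.sum_congr rfl fun k _ => ?_
  rw [ContinuousLinearMap.smul_apply, smul_pow, ContinuousLinearMap.smul_apply,
    hcoe, smul_smul]

end Aux

/-- Let `V` be a finite-dimensional complex vector space with real
structure `σ`, `N` a real (σ-commuting) nilpotent operator with `N F^a ⊆ F^{a-1}` for a
decreasing filtration `F•`, and suppose each `F_y^• := exp(iyN)F^•` (for `y > 0`)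
satisfies the p-opposedness condition `F_y^p ∩ σ(F_y^{-p+1}) = 0`.  Then
`F^p ∩ σ(F^{j-p}) ∩ ker N^j = 0` for all `p` and `j ≥ 0`: a nonzero `α` in that
intersection would yield `exp(iyN)α ∈ F_y^p ∩ σ(F_y^{-p+1})`, contradicting
p-opposedness. -/
theorem stmt16 {V : Type*} [NormedAddCommGroup V] [NormedSpace ℂ V]
    [FiniteDimensional ℂ V]
    (σ : V →ₛₗ[starRingEnd ℂ] V) (hσ : ∀ v : V, σ (σ v) = v)
    (N : V →ₗ[ℂ] V) (hNnil : IsNilpotent N)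
    (hreal : ∀ v : V, σ (N v) = N (σ v))
    (F : ℤ → Submodule ℂ V) (hF : Antitone F)
    (hhor : ∀ a : ℤ, ∀ v ∈ F a, N v ∈ F (a - 1))
    (hopp : ∀ y : ℝ, 0 < y → ∀ p : ℤ,
      ((F p).map (NormedSpace.exp
          ((Complex.I * (y : ℂ)) • LinearMap.toContinuousLinearMap N)).toLinearMap) ⊓
      (((F (-p + 1)).map (NormedSpace.exp
          ((Complex.I * (y : ℂ)) • LinearMap.toContinuousLinearMap N)).toLinearMap).map σ)
        = ⊥) :
    ∀ (p : ℤ) (j : ℕ),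
      F p ⊓ ((F ((j : ℤ) - p)).map σ) ⊓ LinearMap.ker (N ^ j) = ⊥ := by
  obtain ⟨m, hm⟩ := hNnil
  set T := LinearMap.toContinuousLinearMap N with hTdef
  -- σ commutes with powers of N
  have hrealpow : ∀ (k : ℕ) (v : V), σ ((N ^ k) v) = (N ^ k) (σ v) := by
    intro k
    induction k with
    | zero => intro v; simp
    | succ n ih =>
      intro v
      rw [pow_succ, Module.End.mul_apply, Module.End.mul_apply, ih (N v), hreal]
  -- powers of N shift the filtration
  have hpowF : ∀ (k : ℕ) (a : ℤ), ∀ v ∈ F a, (N ^ k) v ∈ F (a - k) := by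
    intro k
    induction k with
    | zero => intro a v hv; simpa using hv
    | succ n ih =>
      intro a v hv
      have := hhor (a - n) _ (ih a v hv)
      rw [pow_succ', Module.End.mul_apply]
      have harith : (a : ℤ) - n - 1 = a - (n + 1 : ℕ) := by push_cast; ring
      rw [← harith]
      exact this
  -- σ conjugates exponentials
  have hσexp : ∀ (c : ℂ) (v : V),
      σ (NormedSpace.exp (c • T) v)
        = NormedSpace.exp ((starRingEnd ℂ c) • T) (σ v) := by
    intro c v
    rw [exp_nilpotent_apply N hm, exp_nilpotent_apply N hm, map_sum]
    refine Finset.sum_congr rfl fun k _ => ?_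
    rw [LinearMap.map_smulₛₗ, hrealpow]
    congr 1
    simp [map_mul, map_pow, map_inv₀]
  intro p j
  rw [eq_bot_iff]
  intro α hα
  simp only [Submodule.mem_inf, Submodule.mem_map, LinearMap.mem_ker] at hα
  obtain ⟨⟨hαF, β, hβ, rfl⟩, hαker⟩ := hα
  have hβj : (N ^ j) β = 0 := by
    have h1 : σ ((N ^ j) β) = 0 := by rw [hrealpow]; exact hαker
    have := congrArg σ h1
    rwa [hσ, map_zero] at this
  -- N^k β = 0 for k ≥ j
  have hβk : ∀ k : ℕ, j ≤ k → (N ^ k) β = 0 := by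
    intro k hk
    calc (N ^ k) β = (N ^ (k - j) * N ^ j) β := by rw [← pow_add, Nat.sub_add_cancel hk]
    _ = (N ^ (k - j)) ((N ^ j) β) := rfl
    _ = 0 := by rw [hβj, map_zero]
  -- exp(-2i N) β ∈ F(-p+1)
  have hA : NormedSpace.exp ((-2 * Complex.I) • T) β ∈ F (-p + 1) := by
    rw [exp_nilpotent_apply N hm]
    refine Submodule.sum_mem _ fun k _ => Submodule.smul_mem _ _ ?_
    by_cases hk : k < j
    · have hmem := hpowF k _ β hβ
      refine hF ?_ hmem
      omega
    · rw [hβk k (le_of_not_gt hk)]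
      exact Submodule.zero_mem _
  -- composition of exponentials
  have hcomp : NormedSpace.exp (Complex.I • T)
      (NormedSpace.exp ((-2 * Complex.I) • T) β)
      = NormedSpace.exp ((-Complex.I) • T) β := by
    have hcomm : Commute (Complex.I • T) ((-2 * Complex.I) • T) :=
      ((Commute.refl T).smul_left Complex.I).smul_right (-2 * Complex.I)
    have hsum : Complex.I • T + (-2 * Complex.I) • T = (-Complex.I) • T := by
      rw [← add_smul]; congr 1; ring
    have : NormedSpace.exp (Complex.I • T) * NormedSpace.exp ((-2 * Complex.I) • T)
        = NormedSpace.exp ((-Complex.I) • T) := by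
      letI : NormedAlgebra ℚ (V →L[ℂ] V) := NormedAlgebra.restrictScalars ℚ ℂ _
      rw [← NormedSpace.exp_add_of_commute hcomm, hsum]
    calc NormedSpace.exp (Complex.I • T) (NormedSpace.exp ((-2 * Complex.I) • T) β)
        = (NormedSpace.exp (Complex.I • T) * NormedSpace.exp ((-2 * Complex.I) • T)) β :=
          rfl
    _ = NormedSpace.exp ((-Complex.I) • T) β := by rw [this]
  -- identify exp(iN)(σ β)
  have hkey : NormedSpace.exp (Complex.I • T) (σ β)
      = σ (NormedSpace.exp ((-Complex.I) • T) β) := by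
    rw [hσexp]
    congr 2
    simp
  have hopp1 := hopp 1 one_pos p
  have hI1 : (Complex.I * ((1 : ℝ) : ℂ)) = Complex.I := by norm_num
  rw [hI1] at hopp1
  have hmem : NormedSpace.exp (Complex.I • T) (σ β) ∈
      ((F p).map (NormedSpace.exp (Complex.I • T)).toLinearMap) ⊓
      (((F (-p + 1)).map (NormedSpace.exp (Complex.I • T)).toLinearMap).map σ) := by
    constructor
    · exact ⟨σ β, hαF, rfl⟩
    · refine ⟨NormedSpace.exp ((-Complex.I) • T) β,
        ⟨NormedSpace.exp ((-2 * Complex.I) • T) β, hA, hcomp⟩, hkey.symm⟩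
  rw [hopp1, Submodule.mem_bot] at hmem
  -- conclude σ β = 0
  have hcomm2 : Commute ((-Complex.I) • T) (Complex.I • T) :=
    ((Commute.refl T).smul_left (-Complex.I)).smul_right Complex.I
  have hz : (-Complex.I) • T + Complex.I • T = 0 := by
    rw [← add_smul]
    simp
  have hinv : NormedSpace.exp ((-Complex.I) • T) * NormedSpace.exp (Complex.I • T) = 1 := by
    letI : NormedAlgebra ℚ (V →L[ℂ] V) := NormedAlgebra.restrictScalars ℚ ℂ _
    rw [← NormedSpace.exp_add_of_commute hcomm2, hz, NormedSpace.exp_zero]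
  have : σ β = 0 := by
    have h2 := congrArg (fun f : V →L[ℂ] V => f (σ β)) hinv
    simp only [ContinuousLinearMap.mul_apply, ContinuousLinearMap.one_apply] at h2
    rw [hmem, map_zero] at h2
    exact h2.symm
  rw [Submodule.mem_bot]
  exact this
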